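/- Let c, d, k ∈ ℝ with c > 0 and d² − 4ck < 0, and define f(u) = √(c u² + d u + k) and a(u) = arctan((2c/√(4ck − d²))(u + d/(2c))). Then f'(u) sin(a(u)) + f(u) a'(u) cos(a(u)) = √c for all u ∈ ℝ. -/

import Mathlib

open Real Set

theorem stmt_8 (c d k : ℝ) (hc : 0 < c) (hk : 0 < k)
    (hΔ : d ^ 2 - 4 * c * k < 0) (f A : ℝ → ℝ)
    (hf : ∀ u, f u = Real.sqrt (c * u ^ 2 + d * u + k))
    (hA : ∀ u, A u =
      Real.arctan ((2 * c / Real.sqrt (4 * c * k - d ^ 2)) * (u + d / (2 * c)))) :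
    ∀ u : ℝ,
      deriv f u * Real.sin (A u) + f u * deriv A u * Real.cos (A u) =
        Real.sqrt c := by
  intro u
  set s := Real.sqrt (4 * c * k - d ^ 2) with hs_def
  have hΔ' : 0 < 4 * c * k - d ^ 2 := by linarith
  have hs2 : s ^ 2 = 4 * c * k - d ^ 2 := Real.sq_sqrt hΔ'.le
  have hs : 0 < s := Real.sqrt_pos.mpr hΔ'
  set Q : ℝ := c * u ^ 2 + d * u + k with hQ_def
  have hQ : 0 < Q := by nlinarith [sq_nonneg (2 * c * u + d)]
  set r := Real.sqrt Q with hr_def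
  have hr2 : r ^ 2 = Q := Real.sq_sqrt hQ.le
  have hr : 0 < r := Real.sqrt_pos.mpr hQ
  set sc := Real.sqrt c with hsc_def
  have hsc2 : sc ^ 2 = c := Real.sq_sqrt hc.le
  have hsc : 0 < sc := Real.sqrt_pos.mpr hc
  set m : ℝ := 2 * c / s with hm_def
  set x : ℝ := m * (u + d / (2 * c)) with hx_def
  have hx : x = (2 * c * u + d) / s := by
    rw [hx_def, hm_def]; field_simp
  have h1x : 1 + x ^ 2 = 4 * c * Q / s ^ 2 := by
    rw [hx]; field_simp; rw [hs2]; ring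
  have hsqrt1x : Real.sqrt (1 + x ^ 2) = 2 * sc * r / s := by
    have h : 1 + x ^ 2 = (2 * sc * r / s) ^ 2 := by
      rw [h1x]; field_simp; nlinarith [hsc2, hr2]
    rw [h, Real.sqrt_sq (by positivity)]
  -- derivative of f
  have hQd : HasDerivAt (fun u : ℝ => c * u ^ 2 + d * u + k) (2 * c * u + d) u := by
    have h1 : HasDerivAt (fun u : ℝ => c * u ^ 2) (c * (2 * u)) u := by
      simpa using ((hasDerivAt_pow 2 u).const_mul c)
    have h2 : HasDerivAt (fun u : ℝ => d * u + k) d u := by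
      simpa using ((hasDerivAt_id u).const_mul d).add_const k
    have h3 : HasDerivAt (fun x : ℝ => c * x ^ 2 + (d * x + k)) (c * (2 * u) + d) u := h1.add h2
    have heq : (fun x : ℝ => c * x ^ 2 + (d * x + k)) = fun u : ℝ => c * u ^ 2 + d * u + k := by
      funext y; ring
    rw [heq] at h3
    convert h3 using 1
    ring
  have hfd : HasDerivAt f ((2 * c * u + d) / (2 * r)) u := by
    have : HasDerivAt (fun u : ℝ => Real.sqrt (c * u ^ 2 + d * u + k))
        ((2 * c * u + d) / (2 * r)) u := hQd.sqrt hQ.ne'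
    exact this.congr_of_eventuallyEq (Filter.Eventually.of_forall fun y => (hf y))
  -- derivative of A
  have hinner : HasDerivAt (fun u : ℝ => m * (u + d / (2 * c))) m u := by
    simpa using ((hasDerivAt_id u).add_const (d / (2 * c))).const_mul m
  have hAd : HasDerivAt A (1 / (1 + x ^ 2) * m) u := by
    have : HasDerivAt (fun u : ℝ => Real.arctan (m * (u + d / (2 * c))))
        (1 / (1 + x ^ 2) * m) u := ((Real.hasDerivAt_arctan x).comp u hinner :)
    exact this.congr_of_eventuallyEq (Filter.Eventually.of_forall fun y => (hA y))
  rw [hfd.deriv, hAd.deriv, hf u, hA u, ← hr_def, ← hx_def,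
    Real.sin_arctan, Real.cos_arctan, hsqrt1x, h1x, hx, hm_def]
  have hc' : c ≠ 0 := hc.ne'
  field_simp
  linear_combination 4 *
    ((4 * c * k - d ^ 2 - 4 * c * Q) * hr2 + r ^ 2 * hs2 - 4 * Q * r ^ 2 * hsc2 -
      4 * c * Q * hQ_def)
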